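/- For any prime p > 2 and any positive non-square integer d with p not dividing d, the period length m_d(p) of the sequence of x-coordinates of solutions of the Pell equation x² − d·y² = 1 taken modulo p divides p² − 1. -/
import Mathlib


/-- For a prime `p > 2` not dividing `d`, the period of the sequence
`(x_n mod p)` of `x`-coordinates of the positive Pell solutions (powers of the
fundamental solution) divides `p² - 1`. -/
theorem stmt7 (d : ℤ) (hd : 0 < d) (hsq : ¬ IsSquare d) (p : ℕ) (hp : p.Prime)
    (hp2 : 2 < p) (hpd : ¬ (p : ℤ) ∣ d)
    (a : Pell.Solution₁ d) (ha : Pell.IsFundamental a) :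
    sInf {T : ℕ | 0 < T ∧
        ∀ n : ℕ, (((a ^ (n + T)).x : ZMod p) = ((a ^ n).x : ZMod p))} ∣ p ^ 2 - 1 := by
  haveI := Fact.mk hp
  set F := GaloisField p 2 with hF
  haveI : Fintype F := Fintype.ofFinite F
  have hcard : Fintype.card F = p ^ 2 := by
    rw [← Nat.card_eq_fintype_card]; exact GaloisField.card p 2 two_ne_zero
  have hchar : ringChar F = p := by
    have : CharP F p := inferInstance
    exact ringChar.eq F p
  -- d is a nonzero square in F
  have hdz : (d : ZMod p) ≠ 0 := fun h => hpd ((ZMod.intCast_zmod_eq_zero_iff_dvd d p).mp h)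
  have hmap : ((d : ℤ) : F) = algebraMap (ZMod p) F ((d : ℤ) : ZMod p) :=
    (map_intCast (algebraMap (ZMod p) F) d).symm
  have hcne : ((d : ℤ) : F) ≠ 0 := by
    rw [hmap]
    exact fun h => hdz ((algebraMap (ZMod p) F).injective (by simpa using h))
  have hodd : p % 2 = 1 := Nat.odd_iff.mp (hp.odd_of_ne_two (by omega))
  obtain ⟨k, hk⟩ : ∃ k, p + 1 = 2 * k := ⟨(p+1)/2, by omega⟩
  obtain ⟨q, hq⟩ : ∃ q, p = q + 1 := ⟨p - 1, by omega⟩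
  have hdiv : p ^ 2 / 2 = (p - 1) * k := by
    have hq1 : p - 1 = q := by omega
    have h2 : p ^ 2 = 2 * (q * k) + 1 := by
      have hk' : q + 1 + 1 = 2 * k := by omega
      have h3 : q * (q + 1 + 1) = q * (2 * k) := by rw [hk']
      have hpp : p ^ 2 = (q + 1) * (q + 1) := by rw [sq, hq]
      nlinarith [h3, hpp]
    rw [hq1]
    omega
  have hsqF : IsSquare ((d : ℤ) : F) := by
    rw [FiniteField.isSquare_iff (by rw [hchar]; omega) hcne, hcard, hdiv, hmap, ← map_pow,
      pow_mul, ZMod.pow_card_sub_one_eq_one hdz, one_pow, map_one]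
  obtain ⟨s, hs⟩ := hsqF
  have hs' : s * s = ((d : ℤ) : F) := hs.symm
  set φ : ℤ√d →+* F := Zsqrtd.lift ⟨s, hs'⟩ with hφ
  -- 2 * x of a solution as φ b + φ (star b)
  have hx2 : ∀ b : Pell.Solution₁ d, φ (b : ℤ√d) + φ (star (b : ℤ√d)) = 2 * ((b.x : ℤ) : F) := by
    intro b
    rw [← map_add]
    have : (b : ℤ√d) + star (b : ℤ√d) = ((2 * b.x : ℤ) : ℤ√d) := by
      ext <;> simp [Zsqrtd.re_star, Zsqrtd.im_star, two_mul] <;> rfl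
    rw [this, map_intCast]
    push_cast
    ring
  set u : F := φ (a : ℤ√d) with hu
  set v : F := φ (star (a : ℤ√d)) with hv
  have huv : u * v = 1 := by
    rw [hu, hv, ← map_mul]
    have : (a : ℤ√d) * star (a : ℤ√d) = 1 := Unitary.mul_star_self_of_mem a.2
    rw [this, map_one]
  have hu0 : u ≠ 0 := fun h => by simp [h] at huv
  have hv0 : v ≠ 0 := fun h => by simp [h] at huv
  have huT : u ^ (p ^ 2 - 1) = 1 := by
    have := FiniteField.pow_card_sub_one_eq_one u hu0
    rwa [hcard] at this
  have hvT : v ^ (p ^ 2 - 1) = 1 := by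
    have := FiniteField.pow_card_sub_one_eq_one v hv0
    rwa [hcard] at this
  have hcoe_pow : ∀ m : ℕ, ((a ^ m : Pell.Solution₁ d) : ℤ√d) = (a : ℤ√d) ^ m := by
    intro m; rfl
  have h2ne : (2 : F) ≠ 0 := by
    have : ((2 : ℕ) : F) ≠ 0 := by
      rw [Ne, CharP.cast_eq_zero_iff F p]
      intro h
      have := Nat.le_of_dvd two_pos h
      omega
    simpa using this
  -- the key periodicity with T = p^2 - 1
  have key : ∀ n : ℕ, (((a ^ (n + (p ^ 2 - 1))).x : ZMod p) = ((a ^ n).x : ZMod p)) := by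
    intro n
    have hFeq : (((a ^ (n + (p ^ 2 - 1))).x : ℤ) : F) = (((a ^ n).x : ℤ) : F) := by
      have e1 := hx2 (a ^ (n + (p ^ 2 - 1)))
      have e2 := hx2 (a ^ n)
      rw [hcoe_pow] at e1 e2
      rw [star_pow] at e1 e2
      rw [map_pow, map_pow] at e1 e2
      rw [← hu, ← hv] at e1 e2
      rw [pow_add, pow_add, huT, hvT, mul_one, mul_one] at e1
      have : 2 * (((a ^ (n + (p ^ 2 - 1))).x : ℤ) : F) = 2 * (((a ^ n).x : ℤ) : F) := by
        rw [← e1, ← e2]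
      exact mul_left_cancel₀ h2ne this
    have : (algebraMap (ZMod p) F) (((a ^ (n + (p ^ 2 - 1))).x : ℤ) : ZMod p)
        = (algebraMap (ZMod p) F) (((a ^ n).x : ℤ) : ZMod p) := by
      rw [map_intCast, map_intCast]; exact hFeq
    exact (algebraMap (ZMod p) F).injective this
  -- now the sInf argument
  set S : Set ℕ := {T : ℕ | 0 < T ∧
      ∀ n : ℕ, (((a ^ (n + T)).x : ZMod p) = ((a ^ n).x : ZMod p))} with hS
  have hTpos : 0 < p ^ 2 - 1 := by
    have h4 : 2 * 2 ≤ p * p := Nat.mul_le_mul hp.two_le hp.two_le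
    have hpp : p ^ 2 = p * p := sq p
    omega
  have hTmem : (p ^ 2 - 1) ∈ S := ⟨hTpos, key⟩
  have hne : S.Nonempty := ⟨_, hTmem⟩
  have hmmem : sInf S ∈ S := Nat.sInf_mem hne
  obtain ⟨hmpos, hmper⟩ := hmmem
  set m := sInf S with hm
  -- periodicity with q*m
  have hqm : ∀ q n : ℕ, (((a ^ (n + q * m)).x : ZMod p) = ((a ^ n).x : ZMod p)) := by
    intro q
    induction q with
    | zero => simp
    | succ q ih =>
      intro n
      have : n + (q + 1) * m = (n + m) + q * m := by ring
      rw [this, ih (n + m), hmper n]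
  -- remainder argument
  have hr : (p ^ 2 - 1) % m = 0 := by
    by_contra hr0
    have hrpos : 0 < (p ^ 2 - 1) % m := Nat.pos_of_ne_zero hr0
    have hrmem : (p ^ 2 - 1) % m ∈ S := by
      refine ⟨hrpos, fun n => ?_⟩
      have hexp : n + (p ^ 2 - 1) % m + (p ^ 2 - 1) / m * m = n + (p ^ 2 - 1) := by
        conv_rhs => rw [← Nat.div_add_mod (p ^ 2 - 1) m]
        ring
      calc ((a ^ (n + (p ^ 2 - 1) % m)).x : ZMod p)
          = ((a ^ (n + (p ^ 2 - 1) % m + (p ^ 2 - 1) / m * m)).x : ZMod p) := (hqm _ _).symm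
        _ = ((a ^ (n + (p ^ 2 - 1))).x : ZMod p) := by rw [hexp]
        _ = ((a ^ n).x : ZMod p) := key n
    have := Nat.sInf_le hrmem
    have hlt : (p ^ 2 - 1) % m < m := Nat.mod_lt _ hmpos
    omega
  exact Nat.dvd_of_mod_eq_zero hr
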